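/- Let D be a finite set, s : D → ℝ with unique maximizer x⋆, and g : D → ℝ^d bounded by G. Define E_β[g] as the softmax average with weights exp(β·s(x)). Then for all β > 0, ‖g(x⋆) − E_β[g]‖ ≤ 2G·|D|·exp(β·ξ), where ξ = max_{x ≠ x⋆}(s(x) − s(x⋆)) < 0. -/

import Mathlib

theorem stmt6 {d : ℕ} {D : Type*} [Fintype D] [DecidableEq D]
    (hcard : 2 ≤ Fintype.card D)
    (s : D → ℝ) (xstar : D) (hmax : ∀ x, x ≠ xstar → s x < s xstar)
    (g : D → EuclideanSpace ℝ (Fin d)) (G : ℝ) (hG : ∀ x, ‖g x‖ ≤ G)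
    (hrest : (Finset.univ.filter (fun x : D => x ≠ xstar)).Nonempty)
    (ξ : ℝ)
    (hξdef : ξ = (Finset.univ.filter (fun x : D => x ≠ xstar)).sup' hrest
        (fun x => s x - s xstar)) :
    ξ < 0 ∧
    ∀ β : ℝ, 0 < β →
      ‖g xstar - (∑ x, Real.exp (β * s x))⁻¹ • ∑ x, Real.exp (β * s x) • g x‖ ≤
        2 * G * (Fintype.card D) * Real.exp (β * ξ) := by
  have hG0 : 0 ≤ G := le_trans (norm_nonneg _) (hG xstar)
  have hξ : ξ < 0 := by
    rw [hξdef]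
    apply (Finset.sup'_lt_iff hrest).mpr
    intro x hx
    simp only [Finset.mem_filter] at hx
    linarith [hmax x hx.2]
  refine ⟨hξ, fun β hβ => ?_⟩
  set S := (Finset.univ.filter (fun x : D => x ≠ xstar)) with hS
  set Z := ∑ x, Real.exp (β * s x) with hZdef
  have hZpos : 0 < Z := Finset.sum_pos (fun x _ => Real.exp_pos _) ⟨xstar, Finset.mem_univ _⟩
  have hZge : Real.exp (β * s xstar) ≤ Z :=
    Finset.single_le_sum (f := fun x => Real.exp (β * s x))
      (fun x _ => (Real.exp_pos _).le) (Finset.mem_univ xstar)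
  have key : g xstar - Z⁻¹ • ∑ x, Real.exp (β * s x) • g x
      = Z⁻¹ • ∑ x, Real.exp (β * s x) • (g xstar - g x) := by
    have h1 : ∑ x, Real.exp (β * s x) • (g xstar - g x)
        = Z • g xstar - ∑ x, Real.exp (β * s x) • g x := by
      simp [smul_sub, Finset.sum_sub_distrib, ← Finset.sum_smul, hZdef]
    rw [h1, smul_sub, inv_smul_smul₀ hZpos.ne']
  rw [key, norm_smul, norm_inv, Real.norm_of_nonneg hZpos.le]
  -- bound the norm of the sum
  have hterm : ∀ x ∈ Finset.univ (α := D), ‖Real.exp (β * s x) • (g xstar - g x)‖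
      ≤ (if x = xstar then 0 else Real.exp (β * s x) * (2 * G)) := by
    intro x _
    by_cases hx : x = xstar
    · simp [hx]
    · simp only [hx, if_false, norm_smul, Real.norm_of_nonneg (Real.exp_pos _).le]
      have : ‖g xstar - g x‖ ≤ 2 * G := by
        calc ‖g xstar - g x‖ ≤ ‖g xstar‖ + ‖g x‖ := norm_sub_le _ _
          _ ≤ 2 * G := by linarith [hG xstar, hG x]
      exact mul_le_mul_of_nonneg_left this (Real.exp_pos _).le
  have hnorm : ‖∑ x, Real.exp (β * s x) • (g xstar - g x)‖
      ≤ ∑ x ∈ S, Real.exp (β * s x) * (2 * G) := by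
    calc ‖∑ x, Real.exp (β * s x) • (g xstar - g x)‖
        ≤ ∑ x, (if x = xstar then 0 else Real.exp (β * s x) * (2 * G)) :=
          norm_sum_le_of_le _ hterm
      _ = ∑ x ∈ S, Real.exp (β * s x) * (2 * G) := by
          rw [hS, Finset.sum_filter]
          apply Finset.sum_congr rfl
          intro x _
          by_cases hx : x = xstar <;> simp [hx]
  have hsx : ∀ x ∈ S, Real.exp (β * s x) ≤ Real.exp (β * s xstar) * Real.exp (β * ξ) := by
    intro x hx
    rw [← Real.exp_add]
    apply Real.exp_le_exp.mpr
    have hle : s x - s xstar ≤ ξ := by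
      rw [hξdef]; exact Finset.le_sup' (fun x => s x - s xstar) hx
    nlinarith
  have hsum2 : ∑ x ∈ S, Real.exp (β * s x) * (2 * G)
      ≤ (Fintype.card D) * (Real.exp (β * s xstar) * Real.exp (β * ξ) * (2 * G)) := by
    calc ∑ x ∈ S, Real.exp (β * s x) * (2 * G)
        ≤ ∑ _x ∈ S, Real.exp (β * s xstar) * Real.exp (β * ξ) * (2 * G) := by
          apply Finset.sum_le_sum
          intro x hx
          exact mul_le_mul_of_nonneg_right (hsx x hx) (by linarith)
      _ = S.card * (Real.exp (β * s xstar) * Real.exp (β * ξ) * (2 * G)) := by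
          rw [Finset.sum_const, nsmul_eq_mul]
      _ ≤ (Fintype.card D) * (Real.exp (β * s xstar) * Real.exp (β * ξ) * (2 * G)) := by
          apply mul_le_mul_of_nonneg_right _ (by positivity)
          exact_mod_cast Finset.card_le_card (Finset.subset_univ S) |>.trans (le_of_eq (Finset.card_univ))
  have hZinv : Z⁻¹ ≤ (Real.exp (β * s xstar))⁻¹ :=
    inv_anti₀ (Real.exp_pos _) hZge
  calc Z⁻¹ * ‖∑ x, Real.exp (β * s x) • (g xstar - g x)‖
      ≤ (Real.exp (β * s xstar))⁻¹ *
        ((Fintype.card D) * (Real.exp (β * s xstar) * Real.exp (β * ξ) * (2 * G))) := by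
        apply mul_le_mul hZinv (hnorm.trans hsum2) (norm_nonneg _)
        positivity
    _ = 2 * G * (Fintype.card D) * Real.exp (β * ξ) := by
        field_simp
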